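/- (Limiting variance ratio for the symmetric blockmodel) Consider the two-class blockmodel with π = 1/2, β = α, γ = xα for some x > 0, x ≠ 1. In the semi-sparse regime (α → 0 with log n/(nα) → 0), the ratio of normalized to unnormalized within-class variance converges: d̃₁₁²/d̂₁₁² → 1/4 + (3/2)·x/(1+x²) in probability. This limit is strictly less than 1 for all x > 0: indeed 1/4 + (3/2)·x/(1+x²) ≤ 1/4 + 3/4 = 1, with equality only at x = 1 (which is excluded). -/

import Mathlib

open MeasureTheory Filter Finset

set_option maxHeartbeats 1000000
noncomputable section

/-- Convergence in probability. -/
def TendstoInProb {Ω : Type*} [MeasurableSpace Ω] (μ : Measure Ω)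
    (X : ℕ → Ω → ℝ) (c : ℝ) : Prop :=
  ∀ ε : ℝ, 0 < ε → Tendsto (fun n => μ {ω | ε ≤ |X n ω - c|}) atTop (nhds 0)

lemma key_bound (L ε δ u v c : ℝ) (hδ : 0 < δ) (hδ2 : δ ≤ 1/2)
    (hδε : δ * (4*|L|+5) ≤ ε)
    (h1 : |u - 1| < δ) (h2 : |v - 1| < δ) (h3 : |c - L| < δ) :
    |u * c / v - L| < ε := by
  have hu := abs_lt.mp h1
  have hv := abs_lt.mp h2
  have hc := abs_lt.mp h3
  have hL : 0 ≤ |L| := abs_nonneg L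
  have hLl := le_abs_self L
  have hLn := neg_abs_le L
  have hv0 : (0:ℝ) < v := by linarith [hv.1]
  have hεpos : 0 < ε := lt_of_lt_of_le (by nlinarith) hδε
  have heq : u * c / v - L = (u*c - L*v)/v := by field_simp
  rw [heq, abs_div, abs_of_pos hv0, div_lt_iff₀ hv0]
  have hdec : u*c - L*v = (u-1)*c + (c-L) + L*(1-v) := by ring
  have h4 : |u*c - L*v| ≤ |u - 1| * |c| + |c - L| + |L| * |v - 1| := by
    rw [hdec]
    calc |(u-1)*c + (c-L) + L*(1-v)| ≤ |(u-1)*c + (c-L)| + |L*(1-v)| := abs_add_le _ _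
      _ ≤ |(u-1)*c| + |c-L| + |L*(1-v)| := by linarith [abs_add_le ((u-1)*c) (c-L)]
      _ = |u - 1| * |c| + |c - L| + |L| * |v - 1| := by rw [abs_mul, abs_mul, abs_sub_comm 1 v]
  have hcabs : |c| ≤ |L| + δ := by
    calc |c| = |L + (c - L)| := by ring_nf
      _ ≤ |L| + |c-L| := abs_add_le _ _
      _ ≤ |L| + δ := by linarith
  have hu1 : |u-1| ≤ δ := le_of_lt h1
  have hv1 : |v-1| ≤ δ := le_of_lt h2
  nlinarith [abs_nonneg (u-1), abs_nonneg (v-1), abs_nonneg (c-L), abs_nonneg c,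
    mul_le_mul hu1 hcabs (abs_nonneg c) (le_of_lt hδ),
    mul_le_mul_of_nonneg_left hv1 hL,
    mul_le_mul_of_nonneg_left (show (1:ℝ)/2 ≤ v by linarith [hv.1]) (le_of_lt hεpos)]

lemma ratio_in_prob {Ω : Type*} [MeasurableSpace Ω] (μ : Measure Ω)
    (X Y : ℕ → Ω → ℝ) (A B : ℕ → ℝ) (L : ℝ)
    (hX : TendstoInProb μ (fun n ω => X n ω / A n) 1)
    (hY : TendstoInProb μ (fun n ω => Y n ω / B n) 1)
    (hc : Tendsto (fun n => A n / B n) atTop (nhds L)) :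
    TendstoInProb μ (fun n ω => X n ω / Y n ω) L := by
  intro ε hε
  set δ : ℝ := min (1/2) (ε / (2*(4*|L|+5))) with hδdef
  have hδpos : 0 < δ := by
    apply lt_min (by norm_num)
    positivity
  have hδ2 : δ ≤ 1/2 := min_le_left _ _
  have hδε : δ * (4*|L|+5) ≤ ε := by
    have h5 : (0:ℝ) < 4*|L|+5 := by positivity
    have := min_le_right (1/2 : ℝ) (ε / (2*(4*|L|+5)))
    calc δ * (4*|L|+5) ≤ (ε / (2*(4*|L|+5))) * (4*|L|+5) := by
          apply mul_le_mul_of_nonneg_right this (le_of_lt h5)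
      _ = ε / 2 := by field_simp
      _ ≤ ε := by linarith
  have h3 : ∀ᶠ n in atTop, |A n / B n - L| < δ := by
    have := Metric.tendsto_nhds.mp hc δ hδpos
    simpa [Real.dist_eq] using this
  have hbnd : ∀ᶠ n in atTop,
      μ {ω | ε ≤ |X n ω / Y n ω - L|} ≤
        μ {ω | δ ≤ |X n ω / A n - 1|} + μ {ω | δ ≤ |Y n ω / B n - 1|} := by
    filter_upwards [h3] with n hn
    refine le_trans (measure_mono ?_) (measure_union_le _ _)
    intro ω hω
    by_contra hcon
    simp only [Set.mem_union, Set.mem_setOf_eq, not_or, not_le] at hcon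
    obtain ⟨hu, hv⟩ := hcon
    simp only [Set.mem_setOf_eq] at hω
    -- nonzeroness
    have hune : X n ω / A n ≠ 0 := by
      intro h; rw [h] at hu; simp at hu; linarith [hδ2]
    have hvne : Y n ω / B n ≠ 0 := by
      intro h; rw [h] at hv; simp at hv; linarith [hδ2]
    have hA : A n ≠ 0 := by intro h; apply hune; simp [h]
    have hB : B n ≠ 0 := by intro h; apply hvne; simp [h]
    have hYne : Y n ω ≠ 0 := by
      intro h; apply hvne; simp [h]
    have heq : X n ω / Y n ω = (X n ω / A n) * (A n / B n) / (Y n ω / B n) := by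
      field_simp
    rw [heq] at hω
    exact absurd hω (not_le.mpr (key_bound L ε δ _ _ _ hδpos hδ2 hδε hu hv hn))
  have hsum : Tendsto (fun n => μ {ω | δ ≤ |X n ω / A n - 1|} +
      μ {ω | δ ≤ |Y n ω / B n - 1|}) atTop (nhds 0) := by
    have := (hX δ hδpos).add (hY δ hδpos)
    simpa using this
  exact tendsto_of_tendsto_of_tendsto_of_le_of_le' tendsto_const_nhds hsum
    (Eventually.of_forall fun n => zero_le) hbnd

/-- Limiting variance ratio for the symmetric blockmodel.
For the two-class blockmodel with `π = 1/2`, `β = α`, `γ = xα` (`x > 0`, `x ≠ 1`) in the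
semi-sparse regime, the within-class variances satisfy the asymptotic formulas of
Theorems 3.1–3.2 (assumed as hypotheses), and hence their ratio converges in
probability to `1/4 + (3/2)·x/(1+x²)`, a quantity strictly less than `1` for all
`x > 0`, `x ≠ 1`. -/
theorem limiting_variance_ratio_symmetric_blockmodel
    {Ω : Type*} [MeasurableSpace Ω] (μ : Measure Ω) [IsProbabilityMeasure μ]
    (x : ℝ) (hx : 0 < x) (hx1 : x ≠ 1)
    (α : ℕ → ℝ) (hαpos : ∀ n, 0 < α n)
    (hα0 : Tendsto α atTop (nhds 0))
    (hsparse : Tendsto (fun n : ℕ => Real.log n / ((n : ℝ) * α n)) atTop (nhds 0))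
    (γ : ℕ → ℝ) (hγ : ∀ n, γ n = x * α n)
    -- population eigenvalues and normalized-model parameters for `π = 1/2`, `β = α`
    (lam1 lam2 μ1 ν2 : ℕ → ℝ)
    (hlam1 : ∀ n : ℕ, lam1 n = (n : ℝ) * (α n + γ n) / 2)
    (hlam2 : ∀ n : ℕ, lam2 n = (n : ℝ) * (α n - γ n) / 2)
    (hμ1 : ∀ n, μ1 n = α n * (1 + x) / 2)
    (hν2 : ∀ n, ν2 n = (1 - x) / (1 + x))
    -- the within-class variances of the two spectral embeddings, with their
    -- asymptotic formulas (the conclusions of the unnormalized/normalized theorems)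
    (D11hat D11til : ℕ → Ω → ℝ)
    (hhat : TendstoInProb μ (fun n ω => D11hat n ω /
      (((1 / (n : ℝ)) / lam1 n ^ 2 + (1 / (n : ℝ)) / lam2 n ^ 2) *
          ((n : ℝ) / 2 * (α n * (1 - α n))) +
        ((1 / (n : ℝ)) / lam1 n ^ 2 + (1 / (n : ℝ)) / lam2 n ^ 2) *
          ((n : ℝ) / 2 * (γ n * (1 - γ n))))) 1)
    (htil : TendstoInProb μ (fun n ω => D11til n ω /
      (((n : ℝ) * (1 / 2) * (α n * (1 - α n))) / ((n : ℝ) ^ 3 * (1 / 2) * μ1 n ^ 2) *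
          (1 / 4 + (1 / 2) * γ n / (μ1 n * ν2 n ^ 2)) +
        ((n : ℝ) * (1 / 2) * (γ n * (1 - γ n))) / ((n : ℝ) ^ 3 * μ1 n ^ 2) *
          (1 / (4 * (1 / 2)) + (1 / 2) * α n / ((1 / 2) * μ1 n * ν2 n ^ 2)))) 1) :
    TendstoInProb μ (fun n ω => D11til n ω / D11hat n ω)
      (1 / 4 + 3 / 2 * (x / (1 + x ^ 2))) ∧
    (∀ t : ℝ, 0 < t → t ≠ 1 → 1 / 4 + 3 / 2 * (t / (1 + t ^ 2)) < 1) := by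
  have h1x : (0:ℝ) < 1 + x := by linarith
  have h1xne : (1:ℝ) + x ≠ 0 := ne_of_gt h1x
  have hmx : (1:ℝ) - x ≠ 0 := sub_ne_zero.mpr (Ne.symm hx1)
  have hsq : (0:ℝ) < 1 + x ^ 2 := by positivity
  constructor
  · refine ratio_in_prob μ D11til D11hat _ _ _ htil hhat ?_
    have h1x : (0:ℝ) < 1 + x := by linarith
    have h1xne : (1:ℝ) + x ≠ 0 := ne_of_gt h1x
    have hmx : (1:ℝ) - x ≠ 0 := sub_ne_zero.mpr (Ne.symm hx1)
    have hsq : (0:ℝ) < 1 + x ^ 2 := by positivity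
    set num : ℝ → ℝ := fun a => (2/(1+x)^2) *
      ((1-a)*(1/4 + x*(1+x)/(1-x)^2) + (x/2)*(1-x*a)*(1/2 + 2*(1+x)/(1-x)^2)) with hnum
    set den : ℝ → ℝ := fun a => (1/(1+x)^2 + 1/(1-x)^2) * ((1-a) + x*(1-x*a)) with hden
    have hmxsq : (0:ℝ) < (1-x)^2 := by
      rcases lt_or_gt_of_ne hmx with h | h
      · nlinarith
      · nlinarith
    have hden0 : den 0 ≠ 0 := by
      have : (0:ℝ) < den 0 := by
        simp only [hden]
        have h1 : (0:ℝ) < 1/(1+x)^2 := by positivity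
        have h2 : (0:ℝ) < 1/(1-x)^2 := by positivity
        nlinarith
      exact ne_of_gt this
    have hf0 : num 0 / den 0 = 1 / 4 + 3 / 2 * (x / (1 + x ^ 2)) := by
      simp only [hnum, hden]
      have h2' : (1-x)^2 ≠ 0 := pow_ne_zero _ hmx
      have h3' : (1+x)^2 ≠ 0 := pow_ne_zero _ h1xne
      norm_num
      field_simp
      ring
    have hcont : ContinuousAt (fun a => num a / den a) 0 := by
      apply ContinuousAt.div
      · fun_prop
      · fun_prop
      · exact hden0
    have heqAB : ∀ᶠ n in atTop, (fun n : ℕ =>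
        (((n : ℝ) * (1 / 2) * (α n * (1 - α n))) / ((n : ℝ) ^ 3 * (1 / 2) * μ1 n ^ 2) *
            (1 / 4 + (1 / 2) * γ n / (μ1 n * ν2 n ^ 2)) +
          ((n : ℝ) * (1 / 2) * (γ n * (1 - γ n))) / ((n : ℝ) ^ 3 * μ1 n ^ 2) *
            (1 / (4 * (1 / 2)) + (1 / 2) * α n / ((1 / 2) * μ1 n * ν2 n ^ 2))) /
        (((1 / (n : ℝ)) / lam1 n ^ 2 + (1 / (n : ℝ)) / lam2 n ^ 2) *
            ((n : ℝ) / 2 * (α n * (1 - α n))) +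
          ((1 / (n : ℝ)) / lam1 n ^ 2 + (1 / (n : ℝ)) / lam2 n ^ 2) *
            ((n : ℝ) / 2 * (γ n * (1 - γ n))))) n = num (α n) / den (α n) := by
      filter_upwards [eventually_ge_atTop 1] with n hn
      have hn0 : (n:ℝ) ≠ 0 := by
        exact_mod_cast Nat.one_le_iff_ne_zero.mp hn
      have ha : α n ≠ 0 := ne_of_gt (hαpos n)
      have hK : (2 / ((n:ℝ)^2 * α n)) ≠ 0 :=
        div_ne_zero two_ne_zero (mul_ne_zero (pow_ne_zero _ hn0) ha)
      have hAeq : ((n : ℝ) * (1 / 2) * (α n * (1 - α n))) / ((n : ℝ) ^ 3 * (1 / 2) * μ1 n ^ 2) *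
            (1 / 4 + (1 / 2) * γ n / (μ1 n * ν2 n ^ 2)) +
          ((n : ℝ) * (1 / 2) * (γ n * (1 - γ n))) / ((n : ℝ) ^ 3 * μ1 n ^ 2) *
            (1 / (4 * (1 / 2)) + (1 / 2) * α n / ((1 / 2) * μ1 n * ν2 n ^ 2))
          = (2/((n:ℝ)^2 * α n)) * num (α n) := by
        rw [hγ, hμ1, hν2]
        simp only [hnum]
        field_simp [hn0, ha, h1xne, hmx]
        ring
      have hBeq : ((1 / (n : ℝ)) / lam1 n ^ 2 + (1 / (n : ℝ)) / lam2 n ^ 2) *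
            ((n : ℝ) / 2 * (α n * (1 - α n))) +
          ((1 / (n : ℝ)) / lam1 n ^ 2 + (1 / (n : ℝ)) / lam2 n ^ 2) *
            ((n : ℝ) / 2 * (γ n * (1 - γ n)))
          = (2/((n:ℝ)^2 * α n)) * den (α n) := by
        have e1 : lam1 n = (n:ℝ) * α n * (1+x) / 2 := by rw [hlam1, hγ]; ring
        have e2 : lam2 n = (n:ℝ) * α n * (1-x) / 2 := by rw [hlam2, hγ]; ring
        rw [e1, e2, hγ]
        simp only [hden]
        field_simp [hn0, ha, h1xne, hmx]
      simp only [hAeq, hBeq, mul_div_mul_left _ _ hK]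
    have hlim : Tendsto (fun n => num (α n) / den (α n)) atTop (nhds (num 0 / den 0)) :=
      hcont.tendsto.comp hα0
    rw [← hf0]
    exact Tendsto.congr' (heqAB.mono fun n h => h.symm) hlim

  · intro t ht ht1
    have h1 : (0:ℝ) < 1 + t ^ 2 := by positivity
    have h2 : (0:ℝ) < (t - 1)^2 := by
      have h3 : t - 1 ≠ 0 := sub_ne_zero.mpr ht1
      positivity
    have h4 : t / (1 + t ^ 2) < 1 / 2 := by
      rw [div_lt_iff₀ h1]; nlinarith
    linarith
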